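/- Let M : Matrix (Fin n) (Fin n) ℝ be symmetric positive definite, and suppose A : Matrix (Fin n) (Fin n) ℝ satisfies M·A + Aᵀ·M + 2λM ≼ 0 (negative semidefinite) for some λ > 0. Then for any solution δ : ℝ → ℝⁿ of the linear ODE δ'(t) = A δ(t), the function V(t) = δ(t)ᵀ M δ(t) satisfies V(t) ≤ V(0) · exp(-2λt) for all t ≥ 0. -/

import Mathlib

open Matrix

theorem stmt12 (n : ℕ) (M A : Matrix (Fin n) (Fin n) ℝ) (lam : ℝ) (hlam : 0 < lam)
    (hM : M.PosDef) (hMsym : M.IsSymm)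
    (hLMI : ∀ x : Fin n → ℝ, x ⬝ᵥ ((M * A + Aᵀ * M + (2 * lam) • M) *ᵥ x) ≤ 0)
    (δ : ℝ → (Fin n → ℝ))
    (hδ : ∀ t : ℝ, HasDerivAt δ (A *ᵥ δ t) t) :
    ∀ t ≥ (0 : ℝ), δ t ⬝ᵥ (M *ᵥ δ t) ≤ (δ 0 ⬝ᵥ (M *ᵥ δ 0)) * Real.exp (-2 * lam * t) := by
  set V : ℝ → ℝ := fun t => δ t ⬝ᵥ (M *ᵥ δ t) with hVdef
  have hcomp : ∀ t i, HasDerivAt (fun s => δ s i) ((A *ᵥ δ t) i) t := by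
    intro t i
    exact (hasDerivAt_pi.mp (hδ t)) i
  have hV : ∀ t, HasDerivAt V ((A *ᵥ δ t) ⬝ᵥ (M *ᵥ δ t) + δ t ⬝ᵥ (M *ᵥ (A *ᵥ δ t))) t := by
    intro t
    have : HasDerivAt (fun s => ∑ i, δ s i * ∑ j, M i j * δ s j)
        (∑ i, ((A *ᵥ δ t) i * ∑ j, M i j * δ t j +
          δ t i * ∑ j, M i j * (A *ᵥ δ t) j)) t := by
      apply HasDerivAt.fun_sum
      intro i _
      exact (hcomp t i).mul (HasDerivAt.fun_sum (fun j _ => (hcomp t j).const_mul (M i j)))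
    convert this using 1 <;> simp [hVdef, dotProduct, mulVec, Finset.mul_sum, Finset.sum_add_distrib]
  have hkey : ∀ t, (A *ᵥ δ t) ⬝ᵥ (M *ᵥ δ t) + δ t ⬝ᵥ (M *ᵥ (A *ᵥ δ t)) ≤ -(2 * lam) * V t := by
    intro t
    have h := hLMI (δ t)
    simp only [add_mulVec, smul_mulVec, dotProduct_add, dotProduct_smul,
      ← mulVec_mulVec] at h
    have h1 : δ t ⬝ᵥ (Aᵀ *ᵥ (M *ᵥ δ t)) = (A *ᵥ δ t) ⬝ᵥ (M *ᵥ δ t) := by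
      rw [dotProduct_mulVec, vecMul_transpose]
    rw [h1] at h
    simp only [smul_eq_mul] at h
    simp only [hVdef]
    linarith
  set g : ℝ → ℝ := fun t => V t * Real.exp (2 * lam * t) with hgdef
  have hg : ∀ t, HasDerivAt g (((A *ᵥ δ t) ⬝ᵥ (M *ᵥ δ t) + δ t ⬝ᵥ (M *ᵥ (A *ᵥ δ t)))
      * Real.exp (2 * lam * t) + V t * (Real.exp (2 * lam * t) * (2 * lam))) t := by
    intro t
    have he : HasDerivAt (fun s => Real.exp (2 * lam * s)) (Real.exp (2 * lam * t) * (2 * lam)) t := by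
      simpa using ((hasDerivAt_id t).const_mul (2 * lam)).exp
    exact (hV t).mul he
  have hg' : ∀ t, deriv g t ≤ 0 := by
    intro t
    rw [(hg t).deriv]
    have hexp : 0 < Real.exp (2 * lam * t) := Real.exp_pos _
    nlinarith [hkey t, hexp]
  have hanti : ∀ t, 0 ≤ t → g t ≤ g 0 := by
    intro t ht
    have := antitoneOn_of_deriv_nonpos convex_univ
      (Continuous.continuousOn (continuous_iff_continuousAt.mpr (fun s => (hg s).continuousAt)))
      (fun s _ => (hg s).differentiableAt.differentiableWithinAt)
      (fun s _ => hg' s)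
    exact this (Set.mem_univ 0) (Set.mem_univ t) ht
  intro t ht
  have h := hanti t ht
  simp only [hgdef, mul_zero, Real.exp_zero, mul_one] at h
  have hexp : 0 < Real.exp (2 * lam * t) := Real.exp_pos _
  have : V t ≤ V 0 * Real.exp (-(2 * lam * t)) := by
    rw [Real.exp_neg, ← div_eq_mul_inv, le_div_iff₀ hexp]
    linarith
  calc δ t ⬝ᵥ (M *ᵥ δ t) = V t := rfl
    _ ≤ V 0 * Real.exp (-(2 * lam * t)) := this
    _ = (δ 0 ⬝ᵥ (M *ᵥ δ 0)) * Real.exp (-2 * lam * t) := by simp only [hVdef]; ring_nf
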